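/- Let n ≥ 3 and let A be an n × n stochastic matrix of the form A = D + (I_n - D)C_n, where D is a diagonal matrix with diagonal entries α₁, ..., α_n ∈ [0,1] and C_n is the cyclic permutation matrix. If the characteristic polynomial of A equals (t - β)^n - α^n with α ∈ (0,1) and β = 1 - α, then D = βI_n, i.e., αᵢ = β for all i. -/

import Mathlib

open Polynomial Matrix

/-- The `n × n` cyclic permutation matrix with 1s in positions `(i, i+1 mod n)`. -/
def Cmat (n : ℕ) : Matrix (Fin n) (Fin n) ℝ :=
  fun i j => if (j : ℕ) = ((i : ℕ) + 1) % n then 1 else 0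

lemma val_succ_iff (m : ℕ) (hm : 1 ≤ m) (a b : Fin (m+1)) :
    (b : ℕ) = ((a : ℕ) + 1) % (m+1) ↔ b = a + 1 := by
  rw [Fin.ext_iff, Fin.val_add, Fin.val_one', Nat.mod_eq_of_lt (show 1 < m+1 by omega)]

lemma fin_ne_add_one (m : ℕ) (hm : 1 ≤ m) (i : Fin (m+1)) : i ≠ i + 1 := by
  intro hEq
  have h1 : (1 : Fin (m+1)) = 0 := by
    have := left_eq_add.mp hEq; exact this
  rw [Fin.ext_iff, Fin.val_one', Fin.val_zero, Nat.mod_eq_of_lt (show 1 < m+1 by omega)] at h1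
  omega

lemma entry (m : ℕ) (hm : 1 ≤ m) (αv : Fin (m+1) → ℝ) (i j : Fin (m+1)) :
    (Matrix.diagonal αv + (1 - Matrix.diagonal αv) * Cmat (m+1)) i j =
      (if j = i then αv i else 0) + (if j = i + 1 then 1 - αv i else 0) := by
  have h1 : (1 : Matrix (Fin (m+1)) (Fin (m+1)) ℝ) - Matrix.diagonal αv
      = Matrix.diagonal (fun k => 1 - αv k) := by
    rw [← Matrix.diagonal_one, Matrix.diagonal_sub]
  rw [Matrix.add_apply, h1, Matrix.diagonal_mul]
  simp only [Cmat, val_succ_iff m hm, Matrix.diagonal_apply]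
  by_cases h : j = i
  · subst h
    rw [if_neg (fin_ne_add_one m hm j), if_neg (fin_ne_add_one m hm j)]
    ring
  · rw [if_neg (fun hh => h hh.symm), if_neg h]
    by_cases h' : j = i + 1 <;> simp [h'] 

open Fin.CommRing in
lemma perm_classify (m : ℕ) (hm : 1 ≤ m) (σ : Equiv.Perm (Fin (m+1)))
    (h : ∀ i, σ i = i ∨ σ i = i - 1) :
    σ = 1 ∨ ∀ i, σ i = i - 1 := by
  by_cases h1 : σ = 1
  · exact Or.inl h1
  right
  have hone : (1 : Fin (m+1)) ≠ 0 := by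
    intro h0
    rw [Fin.ext_iff, Fin.val_one', Fin.val_zero, Nat.mod_eq_of_lt (show 1 < m+1 by omega)] at h0
    omega
  have hsub : ∀ x : Fin (m+1), x - 1 ≠ x := by
    intro x hx
    exact hone (sub_eq_self.mp hx)
  obtain ⟨i₀, hi₀⟩ : ∃ i, σ i ≠ i := by
    by_contra hc
    push_neg at hc
    exact h1 (Equiv.ext hc)
  have hi₀' : σ i₀ = i₀ - 1 := (h i₀).resolve_left hi₀
  have key : ∀ k : ℕ, σ (i₀ - (k : Fin (m+1))) = i₀ - (k : Fin (m+1)) - 1 := by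
    intro k
    induction k with
    | zero => simpa using hi₀'
    | succ k ih =>
      have hcast : ((k+1 : ℕ) : Fin (m+1)) = (k : Fin (m+1)) + 1 := by push_cast; ring
      rw [hcast, ← sub_sub]
      rcases h (i₀ - (k : Fin (m+1)) - 1) with hA | hA
      · exfalso
        have := σ.injective (hA.trans ih.symm)
        exact hsub _ this
      · exact hA
  intro x
  have hx : x = i₀ - (((i₀ - x : Fin (m+1)) : ℕ) : Fin (m+1)) := by
    rw [Fin.cast_val_eq_self]; ring
  rw [hx]
  exact key _

lemma fin_one_ne_zero' (m : ℕ) (hm : 1 ≤ m) : (1 : Fin (m+1)) ≠ 0 := by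
  intro h0
  rw [Fin.ext_iff, Fin.val_one', Fin.val_zero, Nat.mod_eq_of_lt (show 1 < m+1 by omega)] at h0
  omega

lemma fin_sub_one_ne (m : ℕ) (hm : 1 ≤ m) (x : Fin (m+1)) : x - 1 ≠ x := by
  intro hx
  exact fin_one_ne_zero' m hm (sub_eq_self.mp hx)

open Fin.CommRing in
lemma charpoly_eq (m : ℕ) (hm : 2 ≤ m) (αv : Fin (m+1) → ℝ) :
    Matrix.charpoly (Matrix.diagonal αv + (1 - Matrix.diagonal αv) * Cmat (m+1)) =
      (∏ i, (X - C (αv i))) - C (∏ i, (1 - αv i)) := by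
  have hm1 : 1 ≤ m := by omega
  set A := Matrix.diagonal αv + (1 - Matrix.diagonal αv) * Cmat (m+1) with hA
  set c : Equiv.Perm (Fin (m+1)) := (finRotate (m+1))⁻¹ with hcdef
  have hc : ∀ x, c x = x - 1 := by
    intro x
    rw [hcdef, Equiv.Perm.inv_def, Equiv.symm_apply_eq, finRotate_succ_apply]
    ring
  have h1c : (1 : Equiv.Perm (Fin (m+1))) ≠ c := by
    intro hEq
    have h0 : (0 : Fin (m+1)) = c 0 := by rw [← hEq]; rfl
    rw [hc 0, zero_sub] at h0
    exact fin_one_ne_zero' m hm1 (neg_eq_zero.mp h0.symm)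
  have hterm : ∀ σ ∈ (Finset.univ : Finset (Equiv.Perm (Fin (m+1)))),
      σ ∉ ({1, c} : Finset _) → Equiv.Perm.sign σ • ∏ i, charmatrix A (σ i) i = 0 := by
    intro σ _ hσ
    simp only [Finset.mem_insert, Finset.mem_singleton] at hσ
    push_neg at hσ
    have hnotall : ¬ ∀ i, σ i = i ∨ σ i = i - 1 := by
      intro hall
      rcases perm_classify m hm1 σ hall with h | h
      · exact hσ.1 h
      · exact hσ.2 (Equiv.ext fun x => by rw [h x, hc x])
    push_neg at hnotall
    obtain ⟨i, hi1, hi2⟩ := hnotall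
    have hzero : charmatrix A (σ i) i = 0 := by
      rw [charmatrix_apply_ne _ _ _ hi1, hA, entry m hm1 αv (σ i) i,
        if_neg (fun hh => hi1 hh.symm),
        if_neg (fun hh => hi2 (eq_sub_iff_add_eq.mpr hh.symm))]
      simp
    have hp : (∏ i, charmatrix A (σ i) i) = 0 :=
      Finset.prod_eq_zero (Finset.mem_univ i) hzero
    rw [hp, smul_zero]
  rw [Matrix.charpoly, Matrix.det_apply,
    ← Finset.sum_subset (Finset.subset_univ {1, c}) hterm,
    Finset.sum_insert (by simpa using h1c), Finset.sum_singleton]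
  have hdiag : (∏ i, charmatrix A i i) = ∏ i, (X - C (αv i)) := by
    apply Finset.prod_congr rfl
    intro i _
    rw [charmatrix_apply_eq, hA, entry m hm1 αv i i, if_pos rfl,
      if_neg (fin_ne_add_one m hm1 i), add_zero]
  have hcyc : (∏ i, charmatrix A (c i) i) = (-1)^(m+1) * C (∏ i, (1 - αv i)) := by
    have hstep : ∀ i : Fin (m+1), charmatrix A (c i) i = -C (1 - αv (i - 1)) := by
      intro i
      rw [hc i, charmatrix_apply_ne _ _ _ (fin_sub_one_ne m hm1 i), hA,
        entry m hm1 αv (i-1) i, if_neg (fun hh => fin_sub_one_ne m hm1 i hh.symm),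
        if_pos (by rw [sub_add_cancel]), zero_add]
    calc (∏ i, charmatrix A (c i) i) = ∏ i : Fin (m+1), -C (1 - αv (i - 1)) :=
          Finset.prod_congr rfl (fun i _ => hstep i)
      _ = (-1)^(m+1) * ∏ i : Fin (m+1), C (1 - αv (i - 1)) := by
          rw [Finset.prod_congr rfl (fun (i : Fin (m+1)) _ => (neg_one_mul (C (1 - αv (i-1)))).symm),
            Finset.prod_mul_distrib, Finset.prod_const, Finset.card_univ, Fintype.card_fin]
      _ = (-1)^(m+1) * C (∏ i : Fin (m+1), (1 - αv (i - 1))) := by rw [map_prod]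
      _ = (-1)^(m+1) * C (∏ i, (1 - αv i)) := by
          rw [Fintype.prod_equiv (Equiv.subRight (1 : Fin (m+1)))
            (fun x => 1 - αv (x - 1)) (fun y => 1 - αv y) (fun x => rfl)]
  have hsign : Equiv.Perm.sign c = (-1)^m := by
    rw [hcdef, Equiv.Perm.sign_inv, sign_finRotate, Nat.add_sub_cancel]
  simp only [Equiv.Perm.coe_one, id_eq]
  rw [hdiag, hcyc, Equiv.Perm.sign_one, one_smul, hsign]
  have : ((-1 : ℤˣ)^m) • ((-1 : ℝ[X])^(m+1) * C (∏ i, (1 - αv i)))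
      = -C (∏ i, (1 - αv i)) := by
    rcases Nat.even_or_odd m with he | ho
    · rw [he.neg_one_pow, one_smul, Even.add_one he |>.neg_one_pow]
      ring
    · rw [ho.neg_one_pow, Odd.add_one ho |>.neg_one_pow]
      simp
  rw [this, sub_eq_add_neg]

theorem stmt3 (n : ℕ) (hn : 3 ≤ n) (α β : ℝ) (hα : α ∈ Set.Ioo (0 : ℝ) 1) (hβ : β = 1 - α)
    (αv : Fin n → ℝ) (hαv : ∀ i, αv i ∈ Set.Icc (0 : ℝ) 1)
    (hchar : Matrix.charpoly
        (Matrix.diagonal αv + (1 - Matrix.diagonal αv) * Cmat n)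
      = (X - C β) ^ n - C (α ^ n)) :
    ∀ i, αv i = β := by
  obtain ⟨m, rfl⟩ : ∃ m, n = m + 1 := ⟨n - 1, by omega⟩
  have hm : 2 ≤ m := by omega
  rw [charpoly_eq m hm αv] at hchar
  set cst : ℝ := (∏ i, (1 - αv i)) - α^(m+1) with hcst
  have key : (∏ i, (X - C (αv i))) = (X - C β)^(m+1) + C cst := by
    rw [hcst, map_sub]
    linear_combination hchar
  have hP : (∏ i, (X - C (αv i - β))) = X^(m+1) + C cst := by
    have e1 : ∀ i : Fin (m+1), X - C (αv i - β) = (X - C (αv i)).comp (X + C β) := by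
      intro i
      rw [sub_comp, X_comp, C_comp, map_sub]
      ring
    rw [Finset.prod_congr rfl (fun i _ => e1 i), ← Polynomial.prod_comp, key]
    rw [add_comp, pow_comp, sub_comp, X_comp, C_comp, C_comp]
    ring
  have hcompneg : (∏ i, (X - C (αv i - β))).comp (-X)
      = (-1)^(m+1) * ∏ i, (X + C (αv i - β)) := by
    rw [Polynomial.prod_comp,
      Finset.prod_congr rfl (fun (i : Fin (m+1)) _ =>
        show (X - C (αv i - β)).comp (-X) = (-1) * (X + C (αv i - β)) by
          rw [sub_comp, X_comp, C_comp]; ring),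
      Finset.prod_mul_distrib, Finset.prod_const, Finset.card_univ, Fintype.card_fin]
  have hP2 : (∏ i, (X + C (αv i - β))) = X^(m+1) + (-1:ℝ[X])^(m+1) * C cst := by
    have h3 := congrArg (fun p : ℝ[X] => p.comp (-X)) hP
    simp only [hcompneg, add_comp, pow_comp, X_comp, C_comp] at h3
    have hone : ((-1:ℝ[X])^(m+1)) * ((-1:ℝ[X])^(m+1)) = 1 := by
      rw [← mul_pow]; norm_num
    have h4 : (∏ i, (X + C (αv i - β))) = (-1:ℝ[X])^(m+1) * ((-X)^(m+1) + C cst) := by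
      rw [← h3, ← mul_assoc, hone, one_mul]
    rw [h4, show ((-X : ℝ[X]))^(m+1) = (-1:ℝ[X])^(m+1) * X^(m+1) from neg_pow _ _,
      mul_add, ← mul_assoc, hone, one_mul]
  have hexp : expand ℝ 2 (∏ i, (X - C ((αv i - β)^2)))
      = (∏ i, (X - C (αv i - β))) * (∏ i, (X + C (αv i - β))) := by
    rw [map_prod, ← Finset.prod_mul_distrib]
    refine Finset.prod_congr rfl fun i _ => ?_
    rw [map_sub, expand_X, expand_C, map_pow]
    ring
  have hco := congrArg (fun p : ℝ[X] => p.coeff (2*m)) (hexp.trans (by rw [hP, hP2]))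
  rw [Polynomial.coeff_expand (by norm_num : 0 < 2)] at hco
  rw [if_pos (by omega : 2 ∣ 2*m), (by omega : 2*m/2 = m)] at hco
  have hQ : (∏ i : Fin (m+1), (X - C ((αv i - β)^2))).coeff m
      = -∑ i : Fin (m+1), (αv i - β)^2 := by
    have := prod_X_sub_C_coeff_card_pred Finset.univ (fun i : Fin (m+1) => (αv i - β)^2)
      (by simp)
    simpa using this
  have hRco : ((X^(m+1) + C cst) * (X^(m+1) + (-1:ℝ[X])^(m+1) * C cst)).coeff (2*m) = 0 := by
    have hexpand : (X^(m+1) + C cst) * (X^(m+1) + (-1:ℝ[X])^(m+1) * C cst)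
        = X^(2*m+2) + C (cst + (-1)^(m+1)*cst) * X^(m+1) + C ((-1)^(m+1)*cst*cst) := by
      simp only [map_add, _root_.map_mul, map_pow, map_neg, Polynomial.C_1]
      ring
    rw [hexpand]
    simp only [coeff_add, coeff_C_mul, coeff_X_pow, coeff_C,
      if_neg (show ¬ 2*m = 2*m+2 by omega), if_neg (show ¬ 2*m = m+1 by omega),
      if_neg (show ¬ 2*m = 0 by omega)]
    ring
  rw [hQ, hRco] at hco
  have hsum : ∑ i : Fin (m+1), (αv i - β)^2 = 0 := by linarith [hco]
  intro i
  have hzero := (Finset.sum_eq_zero_iff_of_nonneg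
    (fun j _ => sq_nonneg (αv j - β))).mp hsum i (Finset.mem_univ i)
  have := pow_eq_zero_iff (n := 2) (by norm_num) |>.mp hzero
  linarith [this]
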